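/- For every m > 0 there exists β₀ > 0 such that for every 0 < β ≤ β₀ the function ω_β(x) := exp(−β·√(1 + ‖x‖²)) on ℝ² satisfies, for all x ∈ ℝ², the inequality | ω_β(x)·Δω_β(x) − 2‖∇ω_β(x)‖² | < 2 m² · ω_β(x)², where Δ is the Laplacian on ℝ², ∇ the gradient, and ‖·‖ the Euclidean norm. -/

import Mathlib

open Real RealInnerProductSpace

local notation "E2" => EuclideanSpace ℝ (Fin 2)

/-- The Laplacian on `ℝ²`: the sum of the second partial derivatives. -/
noncomputable def laplacian2 (f : EuclideanSpace ℝ (Fin 2) → ℝ)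
    (x : EuclideanSpace ℝ (Fin 2)) : ℝ :=
  ∑ i : Fin 2,
    fderiv ℝ (fun y => fderiv ℝ f y (EuclideanSpace.single i 1)) x (EuclideanSpace.single i 1)

/-- The exponential weight `ω_β(x) = exp(−β√(1 + ‖x‖²))` on `ℝ²`. -/
noncomputable def expWeight (β : ℝ) (x : EuclideanSpace ℝ (Fin 2)) : ℝ :=
  Real.exp (-β * Real.sqrt (1 + ‖x‖ ^ 2))

noncomputable def gfun (x : E2) : ℝ := Real.sqrt (1 + ‖x‖ ^ 2)

lemma gfun_sq (x : E2) : gfun x ^ 2 = 1 + ‖x‖ ^ 2 := by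
  have : (0:ℝ) ≤ 1 + ‖x‖^2 := by positivity
  simp [gfun, Real.sq_sqrt this]

lemma gfun_ge_one (x : E2) : 1 ≤ gfun x := by
  have := Real.sqrt_le_sqrt (show (1:ℝ) ≤ 1 + ‖x‖ ^ 2 by nlinarith [sq_nonneg ‖x‖])
  simpa [gfun] using this

lemma gfun_pos (x : E2) : 0 < gfun x := lt_of_lt_of_le one_pos (gfun_ge_one x)

lemma hasFDerivAt_gfun (x : E2) :
    HasFDerivAt gfun ((gfun x)⁻¹ • innerSL ℝ x) x := by
  have h1 : HasFDerivAt (fun y : E2 => 1 + ‖y‖ ^ 2) (2 • innerSL ℝ x) x := by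
    simpa using (hasStrictFDerivAt_norm_sq x).hasFDerivAt.const_add (1:ℝ)
  have hne : (1 : ℝ) + ‖x‖ ^ 2 ≠ 0 := by positivity
  have h2 := (Real.hasDerivAt_sqrt hne).comp_hasFDerivAt x h1
  refine h2.congr_fderiv ?_
  ext v
  have hg := gfun_pos x
  simp only [ContinuousLinearMap.smul_apply, smul_eq_mul, gfun,
    ContinuousLinearMap.smul_apply]
  field_simp [gfun] at *
  ring

lemma hasFDerivAt_expWeight (β : ℝ) (x : E2) :
    HasFDerivAt (expWeight β) ((-β * expWeight β x / gfun x) • innerSL ℝ x) x := by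
  have h1 : HasFDerivAt (fun y : E2 => -β * gfun y) ((-β) • ((gfun x)⁻¹ • innerSL ℝ x)) x :=
    (hasFDerivAt_gfun x).const_mul (-β)
  have h2 := (Real.hasDerivAt_exp (-β * gfun x)).comp_hasFDerivAt x h1
  have hfun : expWeight β = fun y : E2 => Real.exp (-β * gfun y) := by
    funext y; simp [expWeight, gfun]
  rw [hfun]
  refine h2.congr_fderiv ?_
  ext v
  have hg := (gfun_pos x).ne'
  simp only [ContinuousLinearMap.smul_apply, smul_eq_mul, expWeight, gfun]
  field_simp [gfun]

lemma gradient_expWeight (β : ℝ) (x : E2) :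
    gradient (expWeight β) x = (-β * expWeight β x / gfun x) • x := by
  have h : HasGradientAt (expWeight β) ((-β * expWeight β x / gfun x) • x) x := by
    rw [hasGradientAt_iff_hasFDerivAt]
    refine (hasFDerivAt_expWeight β x).congr_fderiv ?_
    ext v
    simp [InnerProductSpace.toDual_apply_apply, real_inner_smul_left]
  exact h.gradient

lemma fderiv_expWeight_apply (β : ℝ) (y : E2) (v : E2) :
    fderiv ℝ (expWeight β) y v = (-β * expWeight β y / gfun y) * ⟪v, y⟫ := by
  rw [(hasFDerivAt_expWeight β y).fderiv]
  simp only [ContinuousLinearMap.smul_apply, innerSL_apply_apply, smul_eq_mul]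
  rw [real_inner_comm]

lemma fderiv2_expWeight (β : ℝ) (x : E2) (i : Fin 2) :
    fderiv ℝ (fun y => fderiv ℝ (expWeight β) y (EuclideanSpace.single i 1)) x
        (EuclideanSpace.single i 1)
      = -β * expWeight β x / gfun x
        + β ^ 2 * expWeight β x * (x i) ^ 2 / gfun x ^ 2
        + β * expWeight β x * (x i) ^ 2 / gfun x ^ 3 := by
  have hgne := (gfun_pos x).ne'
  have hfun : (fun y => fderiv ℝ (expWeight β) y (EuclideanSpace.single i 1))
      = fun y => (-β * expWeight β y * (gfun y)⁻¹) *
          (innerSL ℝ (EuclideanSpace.single i (1:ℝ))) y := by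
    funext y
    rw [fderiv_expWeight_apply, div_eq_mul_inv]
    simp [real_inner_comm]
  rw [hfun]
  have hginv : HasFDerivAt (fun y : E2 => (gfun y)⁻¹)
      ((-((gfun x) ^ 2)⁻¹) • ((gfun x)⁻¹ • innerSL ℝ x)) x :=
    (hasDerivAt_inv hgne).comp_hasFDerivAt x (hasFDerivAt_gfun x)
  have hc : HasFDerivAt (fun y : E2 => -β * expWeight β y * (gfun y)⁻¹)
      ((-β * expWeight β x) • ((-((gfun x) ^ 2)⁻¹) • ((gfun x)⁻¹ • innerSL ℝ x))
        + (gfun x)⁻¹ • ((-β) • ((-β * expWeight β x / gfun x) • innerSL ℝ x))) x :=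
    (((hasFDerivAt_expWeight β x).const_mul (-β)).mul hginv)
  have hF := hc.mul ((innerSL ℝ (EuclideanSpace.single i (1:ℝ))).hasFDerivAt (x := x))
  show fderiv ℝ ((fun y => -β * expWeight β y * (gfun y)⁻¹) * ⇑((innerSL ℝ) (EuclideanSpace.single i 1))) x _ = _
  rw [hF.fderiv]
  simp only [ContinuousLinearMap.add_apply, ContinuousLinearMap.smul_apply, innerSL_apply_apply,
    smul_eq_mul, EuclideanSpace.inner_single_left, RCLike.star_def, conj_trivial,
    EuclideanSpace.inner_single_right, real_inner_comm]
  simp only [EuclideanSpace.single_apply, if_pos rfl, eq_self_iff_true, if_true]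
  field_simp
  ring

lemma sum_sq_eq_norm_sq (x : E2) : x 0 ^ 2 + x 1 ^ 2 = ‖x‖ ^ 2 := by
  rw [EuclideanSpace.norm_eq, Real.sq_sqrt (by positivity)]
  simp [Fin.sum_univ_two, Real.norm_eq_abs, sq_abs]

lemma laplacian2_expWeight (β : ℝ) (x : E2) :
    laplacian2 (expWeight β) x
      = -2 * β * expWeight β x / gfun x
        + β ^ 2 * expWeight β x * ‖x‖ ^ 2 / gfun x ^ 2
        + β * expWeight β x * ‖x‖ ^ 2 / gfun x ^ 3 := by
  have hgne := (gfun_pos x).ne'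
  rw [← sum_sq_eq_norm_sq]
  simp only [laplacian2, fderiv2_expWeight, Fin.sum_univ_two]
  field_simp
  ring

/-- For every `m > 0` there is `β₀ > 0` such that for all `0 < β ≤ β₀` the exponential
weight satisfies `|ω_β Δω_β − 2‖∇ω_β‖²| < 2m² ω_β²` everywhere. -/
theorem expWeight_laplacian_bound (m : ℝ) (hm : 0 < m) :
    ∃ β₀ : ℝ, 0 < β₀ ∧
      ∀ β : ℝ, 0 < β → β ≤ β₀ →
      ∀ x : EuclideanSpace ℝ (Fin 2),
        |expWeight β x * laplacian2 (expWeight β) x -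
            2 * ‖gradient (expWeight β) x‖ ^ 2| <
          2 * m ^ 2 * expWeight β x ^ 2 := by
  refine ⟨min 1 (m ^ 2 / 2), lt_min one_pos (by positivity), ?_⟩
  intro β hβ hβ' x
  have hβ1 : β ≤ 1 := hβ'.trans (min_le_left _ _)
  have hβm : β ≤ m ^ 2 / 2 := hβ'.trans (min_le_right _ _)
  set G := gfun x with hG
  set w := expWeight β x with hw
  set s := ‖x‖ ^ 2 with hs
  have hGpos : 0 < G := gfun_pos x
  have hG1 : 1 ≤ G := gfun_ge_one x
  have hGsq : G ^ 2 = 1 + s := gfun_sq x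
  have hwpos : 0 < w := Real.exp_pos _
  have hsnn : 0 ≤ s := by positivity
  have hgradsq : ‖gradient (expWeight β) x‖ ^ 2 = (β * w / G) ^ 2 * s := by
    rw [gradient_expWeight, norm_smul, mul_pow, Real.norm_eq_abs, sq_abs]
    rw [← hG, ← hw, ← hs]
    ring
  have hkey : expWeight β x * laplacian2 (expWeight β) x -
      2 * ‖gradient (expWeight β) x‖ ^ 2
      = -(w ^ 2 * (β ^ 2 * (s / G ^ 2) + β * ((2 + s) / G ^ 3))) := by
    rw [laplacian2_expWeight, hgradsq, ← hG, ← hw, ← hs]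
    have hGsq' : G ^ 2 = 1 + ‖x‖ ^ 2 := gfun_sq x
    field_simp
    linear_combination (-2) * hGsq
  rw [hkey, abs_neg]
  have e1 : s / G ^ 2 ≤ 1 := by
    rw [div_le_one (by positivity)]
    nlinarith
  have e2 : (2 + s) / G ^ 3 ≤ 2 := by
    rw [div_le_iff₀ (by positivity)]
    nlinarith [hGsq, hG1]
  have hnn : 0 ≤ w ^ 2 * (β ^ 2 * (s / G ^ 2) + β * ((2 + s) / G ^ 3)) := by positivity
  rw [abs_of_nonneg hnn]
  have : β ^ 2 * (s / G ^ 2) + β * ((2 + s) / G ^ 3) ≤ β ^ 2 + 2 * β := by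
    have h1 : β ^ 2 * (s / G ^ 2) ≤ β ^ 2 * 1 := by
      apply mul_le_mul_of_nonneg_left e1 (by positivity)
    have h2 : β * ((2 + s) / G ^ 3) ≤ β * 2 := by
      apply mul_le_mul_of_nonneg_left e2 (le_of_lt hβ)
    linarith
  have h4 : β ^ 2 + 2 * β < 2 * m ^ 2 := by nlinarith
  calc w ^ 2 * (β ^ 2 * (s / G ^ 2) + β * ((2 + s) / G ^ 3))
      ≤ w ^ 2 * (β ^ 2 + 2 * β) := mul_le_mul_of_nonneg_left this (by positivity)
    _ < 2 * m ^ 2 * w ^ 2 := by nlinarith [mul_lt_mul_of_pos_left h4 (pow_pos hwpos 2)]
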